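/- Polling decreases the quadratic functional: assume 0 < a ≤ min(ℓ/2, 2r) and let ζ be a finite counting measure on the circle S. Then the one-step polling operator satisfies A_p h(ζ) ≤ h(ζ) + a - 2(a²/ℓ)·ζ(S), where h(ζ) = ‖ζ‖_a² and A_p h(ζ) = h(ζ)(1 - k_r(ζ)) + ∑_{x ∈ ζ} h(ζ - δ_x)·m(B_r(x) ∩ Γ_ζ(x)). -/

import Mathlib

open Finset MeasureTheory

/-- The (open) Voronoi cell of `y` with respect to the finite set of sites `F` on the circle. -/
def voronoi (ℓ : ℝ) (F : Finset (AddCircle ℓ)) (y : AddCircle ℓ) : Set (AddCircle ℓ) :=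
  {z | ∀ y' ∈ F, y' ≠ y → dist z y < dist z y'}

/-- The quadratic functional `h(ζ) = ‖ζ‖ₐ² = ∑∑ ζ(x) ζ(y) (a - d(x,y))₊`. -/
noncomputable def quada (ℓ a : ℝ) (ζ : AddCircle ℓ →₀ ℕ) : ℝ :=
  ∑ x ∈ ζ.support, ∑ y ∈ ζ.support, (ζ x : ℝ) * (ζ y : ℝ) * max (a - dist x y) 0

section PollingAux

open Set



noncomputable def hfun (a ℓ s : ℝ) : ℝ := max (a - s) 0 + max (s - (ℓ - a)) 0

noncomputable def Hfun (a ℓ s : ℝ) : ℝ :=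
  a ^ 2 / 2 - (max (a - s) 0) ^ 2 / 2 + (max (s - (ℓ - a)) 0) ^ 2 / 2

lemma gap_ineq {a r ℓ : ℝ} (ha : 0 < a) (haℓ : a ≤ ℓ / 2) (har : a ≤ 2 * r) {s t : ℝ}
    (hs : 0 ≤ s) (hst : s ≤ t) (ht : t ≤ ℓ) :
    Hfun a ℓ t - Hfun a ℓ s ≤ min ((t - s) / 2) r * (hfun a ℓ s + hfun a ℓ t) := by
  set A := max (a - s) 0 with hA
  set B := max (a - t) 0 with hB
  set C := max (s - (ℓ - a)) 0 with hC
  set D := max (t - (ℓ - a)) 0 with hD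
  have hA0 : 0 ≤ A := le_max_right _ _
  have hB0 : 0 ≤ B := le_max_right _ _
  have hC0 : 0 ≤ C := le_max_right _ _
  have hD0 : 0 ≤ D := le_max_right _ _
  have hAa : A ≤ a := max_le (by linarith) ha.le
  have hDa : D ≤ a := max_le (by linarith) ha.le
  have hAB : A ≤ B + (t - s) := max_le (by nlinarith [le_max_left (a - t) (0:ℝ)]) (by linarith)
  have hDC : D ≤ C + (t - s) := max_le (by nlinarith [le_max_left (s - (ℓ - a)) (0:ℝ)]) (by linarith)
  simp only [Hfun, hfun, ← hA, ← hB, ← hC, ← hD]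
  rcases le_total ((t - s) / 2) r with hmin | hmin
  · rw [min_eq_left hmin]
    have h1 : (A - B) * (A + B) ≤ (t - s) * (A + B) :=
      mul_le_mul_of_nonneg_right (by linarith) (by linarith)
    have h2 : (D - C) * (D + C) ≤ (t - s) * (D + C) :=
      mul_le_mul_of_nonneg_right (by linarith) (by linarith)
    nlinarith [h1, h2]
  · rw [min_eq_right hmin]
    have h1 : A * A ≤ a * A := mul_le_mul_of_nonneg_right hAa hA0
    have h2 : D * D ≤ a * D := mul_le_mul_of_nonneg_right hDa hD0
    nlinarith [h1, h2, mul_nonneg hB0 hB0, mul_nonneg hC0 hC0,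
      mul_le_mul_of_nonneg_right har hA0, mul_le_mul_of_nonneg_right har hD0]

noncomputable def prevG (G : Finset ℝ) (q : ℝ) : ℝ := ((G.filter (fun s => s < q)).max).unbotD 0

lemma prevG_spec {G : Finset ℝ} {q : ℝ} (hne : (G.filter (fun s => s < q)).Nonempty) :
    prevG G q ∈ G ∧ prevG G q < q ∧ ∀ s ∈ G, s < q → s ≤ prevG G q := by
  have hmax : (G.filter (fun s => s < q)).max = ((G.filter (fun s => s < q)).max' hne : ℝ) :=
    (Finset.coe_max' hne).symm
  have hP : prevG G q = (G.filter (fun s => s < q)).max' hne := by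
    rw [prevG, hmax]; rfl
  have hmem := Finset.max'_mem _ hne
  rw [Finset.mem_filter] at hmem
  refine ⟨hP ▸ hmem.1, hP ▸ hmem.2, fun s hs hsq => ?_⟩
  rw [hP]
  exact Finset.le_max' (G.filter (fun x => x < q)) s (Finset.mem_filter.2 ⟨hs, hsq⟩)

lemma gap_sum (r : ℝ) (W H : ℝ → ℝ) (G : Finset ℝ) (hne : G.Nonempty)
    (hgap : ∀ s ∈ G, ∀ t ∈ G, s ≤ t → H t - H s ≤ min ((t - s) / 2) r * (W s + W t)) :
    H (G.max' hne) - H (G.min' hne)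
      ≤ ∑ q ∈ G.erase (G.min' hne), min ((q - prevG G q) / 2) r * (W (prevG G q) + W q) := by
  classical
  induction G using Finset.strongInduction with
  | _ G ih =>
  by_cases hc : G.max' hne = G.min' hne
  · have hER : G.erase (G.min' hne) = ∅ := by
      rw [Finset.eq_empty_iff_forall_notMem]
      intro q hq
      rw [Finset.mem_erase] at hq
      exact hq.1 (le_antisymm (hc ▸ Finset.le_max' _ _ hq.2) (Finset.min'_le _ _ hq.2))
    rw [hER, hc]
    simp
  · set m := G.min' hne with hm
    set M := G.max' hne with hM
    have hmM : m < M := lt_of_le_of_ne (Finset.min'_le _ _ (Finset.max'_mem _ hne)) (Ne.symm hc)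
    set G' := G.erase M with hG'
    have hne' : G'.Nonempty := ⟨m, Finset.mem_erase.2 ⟨ne_of_lt hmM, Finset.min'_mem _ hne⟩⟩
    have hsub : G' ⊆ G := Finset.erase_subset _ _
    have hss : G' ⊂ G := Finset.erase_ssubset (Finset.max'_mem _ hne)
    have hmin' : G'.min' hne' = m := by
      refine le_antisymm (Finset.min'_le _ _ (Finset.mem_erase.2 ⟨ne_of_lt hmM, Finset.min'_mem _ hne⟩)) ?_
      exact Finset.le_min' _ _ _ fun s hs => Finset.min'_le _ _ (hsub hs)
    set M' := G'.max' hne' with hM'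
    have hM'G : M' ∈ G := hsub (Finset.max'_mem _ hne')
    have hM'M : M' < M := lt_of_le_of_ne (Finset.le_max' _ _ hM'G)
      (Finset.mem_erase.1 (Finset.max'_mem _ hne')).1
    have hfilter : G.filter (fun s => s < M) = G' := by
      ext s
      simp only [Finset.mem_filter, hG', Finset.mem_erase]
      constructor
      · rintro ⟨h1, h2⟩; exact ⟨ne_of_lt h2, h1⟩
      · rintro ⟨h1, h2⟩; exact ⟨h2, lt_of_le_of_ne (Finset.le_max' _ _ h2) h1⟩
    have hprevM : prevG G M = M' := by
      rw [prevG, hfilter, ← Finset.coe_max' hne']; rfl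
    have hins : G.erase m = insert M (G'.erase m) := by
      rw [hG', Finset.erase_right_comm]
      rw [Finset.insert_erase (Finset.mem_erase.2 ⟨ne_of_lt hmM |>.symm, Finset.max'_mem _ hne⟩)]
    have hMnotmem : M ∉ G'.erase m := fun h =>
      Finset.notMem_erase M G (Finset.mem_of_mem_erase h)
    have hprev_eq : ∀ q ∈ G'.erase m, prevG G q = prevG G' q := by
      intro q hq
      have hqG' : q ∈ G' := Finset.mem_of_mem_erase hq
      have hqM' : q ≤ M' := Finset.le_max' _ _ hqG'
      have : G.filter (fun s => s < q) = G'.filter (fun s => s < q) := by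
        ext s
        simp only [Finset.mem_filter, hG', Finset.mem_erase]
        constructor
        · rintro ⟨h1, h2⟩
          exact ⟨⟨fun hsM => absurd (hsM ▸ h2) (not_lt.2 (le_trans hqM' hM'M.le)), h1⟩, h2⟩
        · rintro ⟨⟨_, h1⟩, h2⟩; exact ⟨h1, h2⟩
      rw [prevG, prevG, this]
    have hIH := ih G' hss hne' (fun s hs t ht hst => hgap s (hsub hs) t (hsub ht) hst)
    rw [hmin'] at hIH
    have hsum : ∑ q ∈ G.erase m, min ((q - prevG G q) / 2) r * (W (prevG G q) + W q)
        = min ((M - M') / 2) r * (W M' + W M)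
          + ∑ q ∈ G'.erase m, min ((q - prevG G' q) / 2) r * (W (prevG G' q) + W q) := by
      rw [hins, Finset.sum_insert hMnotmem, hprevM]
      congr 1
      exact Finset.sum_congr rfl fun q hq => by rw [hprev_eq q hq]
    have hgapM := hgap M' hM'G M (Finset.max'_mem _ hne) hM'M.le
    rw [hsum]
    rw [← hM'] at hIH
    linarith



variable {ℓ : ℝ} [hℓ : Fact (0 < ℓ)]

lemma dist_mk_le (x y : ℝ) : dist ((x:ℝ) : AddCircle ℓ) ((y:ℝ) : AddCircle ℓ) ≤ |x - y| := by
  rw [dist_eq_norm, ← AddCircle.coe_sub]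
  simpa using QuotientAddGroup.norm_mk_le_norm (S := AddSubgroup.zmultiples ℓ) (m := x - y)

lemma dist_mk_ge (x y : ℝ) :
    min |x - y| (ℓ - |x - y|) ≤ dist ((x:ℝ) : AddCircle ℓ) ((y:ℝ) : AddCircle ℓ) := by
  rw [dist_eq_norm, ← AddCircle.coe_sub]
  set u := x - y with hu
  rw [AddCircle.norm_eq]
  set k := round (ℓ⁻¹ * u) with hk
  have hl := hℓ.out
  rcases lt_trichotomy k 0 with h | h | h
  · have hk1 : (k : ℝ) ≤ -1 := by exact_mod_cast Int.le_of_lt_add_one (by simpa using h)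
    have h2 : u - k * ℓ ≥ ℓ - |u| := by nlinarith [abs_nonneg u, neg_abs_le u, le_abs_self u]
    calc min |u| (ℓ - |u|) ≤ ℓ - |u| := min_le_right _ _
      _ ≤ |u - k*ℓ| := le_trans h2 (le_abs_self _)
  · simp [h]
  · have hk1 : (1:ℝ) ≤ (k : ℝ) := by exact_mod_cast h
    have h2 : k * ℓ - u ≥ ℓ - |u| := by nlinarith [le_abs_self u]
    calc min |u| (ℓ - |u|) ≤ ℓ - |u| := min_le_right _ _
      _ ≤ |u - k*ℓ| := le_trans h2 (by rw [abs_sub_comm]; exact le_abs_self _)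

lemma measurableSet_tau (v₀ : ℝ) {S : Set ℝ} (hS : MeasurableSet S) :
    MeasurableSet {z : AddCircle ℓ | ((AddCircle.equivIoc ℓ v₀ z : ℝ)) ∈ S} :=
  (AddCircle.measurableEquivIoc ℓ v₀).measurable (measurable_subtype_coe hS)

lemma haar_tau (v₀ : ℝ) {S : Set ℝ} (hS : MeasurableSet S) (hsub : S ⊆ Set.Ioc v₀ (v₀ + ℓ)) :
    (AddCircle.haarAddCircle {z : AddCircle ℓ | ((AddCircle.equivIoc ℓ v₀ z : ℝ)) ∈ S}).toReal
      = (volume S).toReal / ℓ := by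
  set A : Set (AddCircle ℓ) := {z | ((AddCircle.equivIoc ℓ v₀ z : ℝ)) ∈ S} with hA
  have hmeasA : MeasurableSet A := measurableSet_tau v₀ hS
  have hpre : (QuotientAddGroup.mk ⁻¹' A : Set ℝ) ∩ Set.Ioc v₀ (v₀ + ℓ) = S := by
    ext x
    constructor
    · rintro ⟨hx1, hx2⟩
      have : ((AddCircle.equivIoc ℓ v₀ ((x:ℝ):AddCircle ℓ)) : ℝ) = x :=
        (toIocMod_eq_self hℓ.out).2 hx2
      simpa [A, this] using hx1
    · intro hx
      have hx2 := hsub hx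
      have : ((AddCircle.equivIoc ℓ v₀ ((x:ℝ):AddCircle ℓ)) : ℝ) = x :=
        (toIocMod_eq_self hℓ.out).2 hx2
      exact ⟨by simpa [A, this] using hx, hx2⟩
  have h1 : (volume : Measure (AddCircle ℓ)) A = volume S := by
    rw [← (AddCircle.measurePreserving_mk ℓ v₀).measure_preimage hmeasA.nullMeasurableSet,
      Measure.restrict_apply (AddCircle.measurable_mk' hmeasA)]
    exact congrArg _ hpre
  have h2 : (volume : Measure (AddCircle ℓ)) A = ENNReal.ofReal ℓ * AddCircle.haarAddCircle A := by
    rw [AddCircle.volume_eq_smul_haarAddCircle]; rfl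
  have h3 : volume S = ENNReal.ofReal ℓ * AddCircle.haarAddCircle A := h1 ▸ h2
  rw [h3, ENNReal.toReal_mul, ENNReal.toReal_ofReal hℓ.out.le,
    mul_div_cancel_left₀ _ hℓ.out.ne']

lemma measurableSet_voronoi (F : Finset (AddCircle ℓ)) (y : AddCircle ℓ) :
    MeasurableSet (voronoi ℓ F y) := by
  have : voronoi ℓ F y = ⋂ y' ∈ (F : Set (AddCircle ℓ)), ⋂ (_ : y' ≠ y), {z | dist z y < dist z y'} := by
    ext z; simp [voronoi]
  rw [this]
  refine MeasurableSet.biInter (F : Set (AddCircle ℓ)).to_countable fun y' _ => ?_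
  refine MeasurableSet.iInter fun _ => ?_
  exact measurableSet_lt (continuous_id.dist continuous_const).measurable
    (continuous_id.dist continuous_const).measurable

variable {ℓ : ℝ} [hℓ : Fact (0 < ℓ)]

lemma core (a r : ℝ) (ha : 0 < a) (haℓ : a ≤ ℓ / 2) (har : a ≤ 2 * r)
    (F : Finset (AddCircle ℓ)) {v : AddCircle ℓ} (hv : v ∈ F) :
    a ^ 2 / ℓ ≤ ∑ x ∈ F, max (a - dist x v) 0 *
      (AddCircle.haarAddCircle (Metric.ball x r ∩ voronoi ℓ F x)).toReal := by
  classical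
  have hl := hℓ.out
  have hr : 0 < r := by linarith
  obtain ⟨v₀, rfl⟩ : ∃ v₀ : ℝ, v = ((v₀ : ℝ) : AddCircle ℓ) :=
    ⟨(AddCircle.equivIoc ℓ 0 v : ℝ), ((AddCircle.equivIoc ℓ 0).symm_apply_apply v).symm⟩
  set τ : AddCircle ℓ → ℝ := fun z => ((AddCircle.equivIoc ℓ v₀ z : ℝ)) with hτ
  have hτmem : ∀ z, τ z ∈ Set.Ioc v₀ (v₀ + ℓ) := fun z => (AddCircle.equivIoc ℓ v₀ z).2
  have hτmk : ∀ z, ((τ z : ℝ) : AddCircle ℓ) = z :=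
    fun z => (AddCircle.equivIoc ℓ v₀).symm_apply_apply z
  have hτv : τ ((v₀ : ℝ) : AddCircle ℓ) = v₀ + ℓ := by
    have h1 : ((v₀ : ℝ) : AddCircle ℓ) = ((v₀ + ℓ : ℝ) : AddCircle ℓ) :=
      (AddCircle.coe_add_period ℓ v₀).symm
    rw [hτ]
    simp only [h1]
    exact (toIocMod_eq_self hl).2 ⟨by linarith, le_rfl⟩
  set G : Finset ℝ := insert v₀ (F.image τ) with hG
  have hGne : G.Nonempty := ⟨v₀, Finset.mem_insert_self _ _⟩
  have hGv₀ : v₀ ∈ G := Finset.mem_insert_self _ _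
  have hGIcc : ∀ s ∈ G, v₀ ≤ s ∧ s ≤ v₀ + ℓ := by
    intro s hs
    rcases Finset.mem_insert.1 hs with h | h
    · exact ⟨h.ge, by linarith⟩
    · obtain ⟨x, _, rfl⟩ := Finset.mem_image.1 h
      exact ⟨(hτmem x).1.le, (hτmem x).2⟩
  have hGF : ∀ s ∈ G, ((s : ℝ) : AddCircle ℓ) ∈ F := by
    intro s hs
    rcases Finset.mem_insert.1 hs with h | h
    · subst h; exact hv
    · obtain ⟨x, hx, rfl⟩ := Finset.mem_image.1 h
      rw [hτmk]; exact hx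
  have hmin : G.min' hGne = v₀ :=
    le_antisymm (Finset.min'_le _ _ hGv₀) (Finset.le_min' _ _ _ fun s hs => (hGIcc s hs).1)
  have hℓG : v₀ + ℓ ∈ G := Finset.mem_insert_of_mem (Finset.mem_image.2 ⟨_, hv, hτv⟩)
  have hmax : G.max' hGne = v₀ + ℓ :=
    le_antisymm (Finset.max'_le _ _ _ fun s hs => (hGIcc s hs).2) (Finset.le_max' _ _ hℓG)
  set w : AddCircle ℓ → ℝ := fun x => max (a - dist x ((v₀:ℝ) : AddCircle ℓ)) 0 with hw
  set W : ℝ → ℝ := fun s => w ((s : ℝ) : AddCircle ℓ) with hWdef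
  have hw0 : ∀ x, 0 ≤ w x := fun x => le_max_right _ _
  have hW0 : ∀ s, 0 ≤ W s := fun s => hw0 _
  -- dist of mk s to v
  have hdistv : ∀ s, v₀ ≤ s → s ≤ v₀ + ℓ →
      dist ((s : ℝ) : AddCircle ℓ) ((v₀:ℝ) : AddCircle ℓ) ≤ min (s - v₀) (v₀ + ℓ - s) := by
    intro s h1 h2
    refine le_min ?_ ?_
    · have := dist_mk_le (ℓ := ℓ) s v₀
      rwa [abs_of_nonneg (by linarith)] at this
    · have h3 : ((v₀ : ℝ) : AddCircle ℓ) = ((v₀ + ℓ : ℝ) : AddCircle ℓ) :=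
        (AddCircle.coe_add_period ℓ v₀).symm
      have := dist_mk_le (ℓ := ℓ) s (v₀ + ℓ)
      rw [abs_of_nonpos (by linarith)] at this
      rw [h3]
      linarith [this]
  have hWge : ∀ s ∈ G, hfun a ℓ (s - v₀) ≤ W s := by
    intro s hs
    obtain ⟨h1, h2⟩ := hGIcc s hs
    have hd := hdistv s h1 h2
    have hd1 : dist ((s : ℝ) : AddCircle ℓ) ((v₀:ℝ) : AddCircle ℓ) ≤ s - v₀ :=
      le_trans hd (min_le_left _ _)
    have hd2 : dist ((s : ℝ) : AddCircle ℓ) ((v₀:ℝ) : AddCircle ℓ) ≤ v₀ + ℓ - s :=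
      le_trans hd (min_le_right _ _)
    rw [hfun, hWdef]
    simp only [hw]
    rcases le_or_gt (a - (s - v₀)) 0 with hc1 | hc1
    · rcases le_or_gt ((s - v₀) - (ℓ - a)) 0 with hc2 | hc2
      · rw [max_eq_right hc1, max_eq_right hc2]
        simpa using le_max_right _ (0:ℝ)
      · rw [max_eq_right hc1]
        have : (s - v₀) - (ℓ - a) ≤ a - dist ((s : ℝ) : AddCircle ℓ) ((v₀:ℝ) : AddCircle ℓ) := by
          linarith
        calc 0 + max ((s - v₀) - (ℓ - a)) 0 = max ((s - v₀) - (ℓ - a)) 0 := by ring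
          _ ≤ max (a - dist ((s : ℝ) : AddCircle ℓ) ((v₀:ℝ) : AddCircle ℓ)) 0 :=
            max_le_max this le_rfl
    · have hc2 : (s - v₀) - (ℓ - a) ≤ 0 := by linarith
      rw [max_eq_right hc2]
      have : a - (s - v₀) ≤ a - dist ((s : ℝ) : AddCircle ℓ) ((v₀:ℝ) : AddCircle ℓ) := by linarith
      calc max (a - (s - v₀)) 0 + 0 = max (a - (s - v₀)) 0 := by ring
        _ ≤ max (a - dist ((s : ℝ) : AddCircle ℓ) ((v₀:ℝ) : AddCircle ℓ)) 0 :=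
          max_le_max this le_rfl
  have hgap' : ∀ s ∈ G, ∀ t ∈ G, s ≤ t →
      (fun u => Hfun a ℓ (u - v₀)) t - (fun u => Hfun a ℓ (u - v₀)) s
        ≤ min ((t - s) / 2) r * (W s + W t) := by
    intro s hs t ht hst
    obtain ⟨hs1, hs2⟩ := hGIcc s hs
    obtain ⟨ht1, ht2⟩ := hGIcc t ht
    have h1 := gap_ineq ha haℓ har (s := s - v₀) (t := t - v₀)
      (by linarith) (by linarith) (by linarith)
    have h2 : t - v₀ - (s - v₀) = t - s := by ring
    rw [h2] at h1
    refine le_trans h1 ?_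
    have hmin0 : 0 ≤ min ((t - s) / 2) r := le_min (by linarith) hr.le
    exact mul_le_mul_of_nonneg_left
      (add_le_add (hWge s hs) (hWge t ht)) hmin0
  have hsum := gap_sum r W (fun u => Hfun a ℓ (u - v₀)) G hGne hgap'
  rw [hmin, hmax] at hsum
  simp only [add_sub_cancel_left, sub_self] at hsum
  have hH0 : Hfun a ℓ 0 = 0 := by
    rw [Hfun, max_eq_left (by linarith), max_eq_right (by linarith)]
    ring
  have hHℓ : Hfun a ℓ ℓ = a ^ 2 := by
    rw [Hfun, max_eq_right (by linarith), max_eq_left (by linarith)]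
    ring
  rw [hH0, hHℓ, sub_zero] at hsum
  -- measure side
  set ν := (AddCircle.haarAddCircle : Measure (AddCircle ℓ)) with hν
  set BΓ : AddCircle ℓ → Set (AddCircle ℓ) :=
    fun x => Metric.ball x r ∩ voronoi ℓ F x with hBΓ
  have hBΓmeas : ∀ x, MeasurableSet (BΓ x) :=
    fun x => Metric.isOpen_ball.measurableSet.inter (measurableSet_voronoi F x)
  set D : ℝ → Set (AddCircle ℓ) := fun q => {z | τ z ∈ Set.Ioc (prevG G q) q} with hD
  have hDmeas : ∀ q, MeasurableSet (D q) := fun q => measurableSet_tau v₀ measurableSet_Ioc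
  have key : ∀ q ∈ G.erase v₀,
      min ((q - prevG G q) / 2) r * (W (prevG G q) + W q) / ℓ
        ≤ ∑ x ∈ F, w x * (ν (BΓ x ∩ D q)).toReal := by
    intro q hq
    have hqG : q ∈ G := Finset.mem_of_mem_erase hq
    have hqne : q ≠ v₀ := (Finset.mem_erase.1 hq).1
    have hqv₀ : v₀ < q := lt_of_le_of_ne (hGIcc q hqG).1 (Ne.symm hqne)
    have hfne : (G.filter (fun s => s < q)).Nonempty :=
      ⟨v₀, Finset.mem_filter.2 ⟨hGv₀, hqv₀⟩⟩
    obtain ⟨hpG, hpq, hpmax⟩ := prevG_spec hfne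
    set p := prevG G q with hp
    set δ := min ((q - p) / 2) r with hδdef
    have hδpos : 0 < δ := lt_min (by linarith) hr
    have hδ2 : δ ≤ (q - p) / 2 := min_le_left _ _
    have hδr : δ ≤ r := min_le_right _ _
    have hpIcc := hGIcc p hpG
    have hqIcc := hGIcc q hqG
    set xp : AddCircle ℓ := ((p : ℝ) : AddCircle ℓ) with hxp
    set xq : AddCircle ℓ := ((q : ℝ) : AddCircle ℓ) with hxq
    have hxpF : xp ∈ F := hGF p hpG
    have hxqF : xq ∈ F := hGF q hqG
    set L : Set (AddCircle ℓ) := {z | τ z ∈ Set.Ioo p (p + δ)} with hL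
    set R : Set (AddCircle ℓ) := {z | τ z ∈ Set.Ioc (q - δ) q} with hR
    have hDq : D q = {z | τ z ∈ Set.Ioc p q} := by rw [hD]
    -- σ facts for other sites
    have hσfact : ∀ y' ∈ F, (τ y' ∈ G) ∧ ((τ y' : ℝ) : AddCircle ℓ) = y' := fun y' hy' =>
      ⟨Finset.mem_insert_of_mem (Finset.mem_image.2 ⟨y', hy', rfl⟩), hτmk y'⟩
    -- L inclusion
    have hLsub : L ⊆ BΓ xp ∩ D q := by
      intro z hz
      obtain ⟨hz1, hz2⟩ : p < τ z ∧ τ z < p + δ := hz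
      have hdzp : dist z xp ≤ τ z - p := by
        have h := dist_mk_le (ℓ := ℓ) (τ z) p
        rw [hτmk z] at h
        rwa [abs_of_pos (by linarith)] at h
      refine ⟨⟨?_, ?_⟩, ?_⟩
      · exact Metric.mem_ball.2 (lt_of_le_of_lt hdzp (by linarith))
      · intro y' hy' hy'ne
        obtain ⟨hσG, hy'mk⟩ := hσfact y' hy'
        set σ := τ y' with hσ
        obtain ⟨hσ1, hσ2⟩ := hτmem y'
        have hdisty : min |τ z - σ| (ℓ - |τ z - σ|) ≤ dist z y' := by
          have h := dist_mk_ge (ℓ := ℓ) (τ z) σ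
          rwa [hτmk z, hy'mk] at h
        have hσnep : σ ≠ p := fun h => hy'ne (by rw [← hy'mk, h])
        refine lt_of_le_of_lt hdzp (lt_of_lt_of_le ?_ hdisty)
        have hcase : σ ≤ p ∨ q ≤ σ := by
          rcases lt_or_ge σ q with h | h
          · exact Or.inl (hpmax σ hσG h)
          · exact Or.inr h
        rw [lt_min_iff]
        rcases hcase with hσp | hσq
        · have hσp' : σ < p := lt_of_le_of_ne hσp hσnep
          constructor
          · rw [abs_of_pos (by linarith)]; linarith
          · rw [abs_of_pos (by linarith : (0:ℝ) < τ z - σ)]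
            linarith
        · have h1 : τ z < σ := by linarith
          rw [abs_of_neg (by linarith : τ z - σ < 0)]
          constructor
          · linarith
          · rcases lt_or_eq_of_le hσ2 with hσlt | hσtop
            · linarith [hpIcc.1]
            · have hpv : v₀ < p := by
                rcases lt_or_eq_of_le hpIcc.1 with h | h
                · exact h
                · exfalso
                  apply hy'ne
                  rw [← hy'mk, hσ, hσtop, hxp, ← h]
                  exact AddCircle.coe_add_period ℓ v₀
              linarith
      · show τ z ∈ Set.Ioc p q
        exact ⟨hz1, by linarith⟩
    -- R inclusion
    have hRsub : R ⊆ BΓ xq ∩ D q := by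
      intro z hz
      obtain ⟨hz1, hz2⟩ : q - δ < τ z ∧ τ z ≤ q := hz
      have hdzq : dist z xq ≤ q - τ z := by
        have h := dist_mk_le (ℓ := ℓ) (τ z) q
        rw [hτmk z] at h
        rwa [abs_of_nonpos (by linarith), neg_sub] at h
      refine ⟨⟨?_, ?_⟩, ?_⟩
      · exact Metric.mem_ball.2 (lt_of_le_of_lt hdzq (by linarith))
      · intro y' hy' hy'ne
        obtain ⟨hσG, hy'mk⟩ := hσfact y' hy'
        set σ := τ y' with hσ
        obtain ⟨hσ1, hσ2⟩ := hτmem y'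
        have hdisty : min |τ z - σ| (ℓ - |τ z - σ|) ≤ dist z y' := by
          have h := dist_mk_ge (ℓ := ℓ) (τ z) σ
          rwa [hτmk z, hy'mk] at h
        have hσneq : σ ≠ q := fun h => hy'ne (by rw [← hy'mk, h])
        refine lt_of_le_of_lt hdzq (lt_of_lt_of_le ?_ hdisty)
        have hcase : σ ≤ p ∨ q < σ := by
          rcases lt_or_ge σ q with h | h
          · exact Or.inl (hpmax σ hσG h)
          · exact Or.inr (lt_of_le_of_ne h (Ne.symm hσneq))
        rw [lt_min_iff]
        rcases hcase with hσp | hσq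
        · have h1 : σ < τ z := by linarith
          constructor
          · rw [abs_of_pos (by linarith : (0:ℝ) < τ z - σ)]; linarith
          · rw [abs_of_pos (by linarith : (0:ℝ) < τ z - σ)]
            linarith [hqIcc.2]
        · have h1 : τ z < σ := by linarith
          rw [abs_of_neg (by linarith : τ z - σ < 0)]
          constructor
          · linarith
          · linarith [hpIcc.1, hσ2]
      · show τ z ∈ Set.Ioc p q
        exact ⟨by linarith, hz2⟩
    -- measures of arcs
    have hLval : (ν L).toReal = δ / ℓ := by
      rw [hν, hL]
      rw [haar_tau v₀ measurableSet_Ioo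
        (fun u hu => ⟨lt_of_le_of_lt hpIcc.1 hu.1, by
          have := hu.2; have := hqIcc.2; simp only [Set.mem_Ioo] at hu; linarith [hu.2]⟩)]
      rw [Real.volume_Ioo, ENNReal.toReal_ofReal (by linarith)]
      congr 1
      ring
    have hRval : (ν R).toReal = δ / ℓ := by
      rw [hν, hR]
      rw [haar_tau v₀ measurableSet_Ioc
        (fun u hu => ⟨by
          simp only [Set.mem_Ioc] at hu; linarith [hu.1, hpIcc.1], by
          simp only [Set.mem_Ioc] at hu; linarith [hu.2, hqIcc.2]⟩)]
      rw [Real.volume_Ioc, ENNReal.toReal_ofReal (by linarith)]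
      congr 1
      ring
    have hWp : W p = w xp := rfl
    have hWq : W q = w xq := rfl
    have hterm_nonneg : ∀ x ∈ F, 0 ≤ w x * (ν (BΓ x ∩ D q)).toReal :=
      fun x _ => mul_nonneg (hw0 x) ENNReal.toReal_nonneg
    by_cases hxx : xp = xq
    · -- single site
      have hWpq : W p = W q := by rw [hWp, hWq, hxx]
      have hsub2 : L ∪ R ⊆ BΓ xp ∩ D q :=
        Set.union_subset hLsub (by rw [hxx]; exact hRsub)
      have hdisjLR : Disjoint L R := by
        rw [Set.disjoint_left]
        rintro z ⟨_, h2⟩ ⟨h3, _⟩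
        linarith
      have hm : ν (L ∪ R) = ν L + ν R :=
        measure_union hdisjLR (measurableSet_tau v₀ measurableSet_Ioc)
      have hmono : (ν (L ∪ R)).toReal ≤ (ν (BΓ xp ∩ D q)).toReal :=
        ENNReal.toReal_mono (measure_ne_top _ _) (measure_mono hsub2)
      have hLR : (ν (L ∪ R)).toReal = δ / ℓ + δ / ℓ := by
        rw [hm, ENNReal.toReal_add (measure_ne_top _ _) (measure_ne_top _ _), hLval, hRval]
      have hsingle : w xp * (ν (BΓ xp ∩ D q)).toReal
          ≤ ∑ x ∈ F, w x * (ν (BΓ x ∩ D q)).toReal :=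
        Finset.single_le_sum hterm_nonneg hxpF
      have : δ * (W p + W q) / ℓ ≤ w xp * (ν (BΓ xp ∩ D q)).toReal := by
        rw [hWpq, hWq]
        calc δ * (w xq + w xq) / ℓ = w xq * (δ / ℓ + δ / ℓ) := by ring
          _ ≤ w xq * (ν (BΓ xp ∩ D q)).toReal := by
            rw [← hLR]
            exact mul_le_mul_of_nonneg_left hmono (hw0 xq)
          _ = w xp * (ν (BΓ xp ∩ D q)).toReal := by rw [hxx]
      exact le_trans this hsingle
    · -- two sites
      have hpairsub : ({xp, xq} : Finset (AddCircle ℓ)) ⊆ F := by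
        intro x hx
        rcases Finset.mem_insert.1 hx with h | h
        · exact h ▸ hxpF
        · exact (Finset.mem_singleton.1 h) ▸ hxqF
      have hpair : ∑ x ∈ ({xp, xq} : Finset (AddCircle ℓ)), w x * (ν (BΓ x ∩ D q)).toReal
          ≤ ∑ x ∈ F, w x * (ν (BΓ x ∩ D q)).toReal :=
        Finset.sum_le_sum_of_subset_of_nonneg hpairsub (fun x hx _ => hterm_nonneg x hx)
      rw [Finset.sum_pair hxx] at hpair
      have hbp : w xp * (δ / ℓ) ≤ w xp * (ν (BΓ xp ∩ D q)).toReal := by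
        rw [← hLval]
        exact mul_le_mul_of_nonneg_left
          (ENNReal.toReal_mono (measure_ne_top _ _) (measure_mono hLsub)) (hw0 xp)
      have hbq : w xq * (δ / ℓ) ≤ w xq * (ν (BΓ xq ∩ D q)).toReal := by
        rw [← hRval]
        exact mul_le_mul_of_nonneg_left
          (ENNReal.toReal_mono (measure_ne_top _ _) (measure_mono hRsub)) (hw0 xq)
      have : δ * (W p + W q) / ℓ = w xp * (δ / ℓ) + w xq * (δ / ℓ) := by
        rw [hWp, hWq]; ring
      linarith
  -- combine
  have hDdisj0 : ∀ q1 ∈ G.erase v₀, ∀ q2 ∈ G.erase v₀, q1 < q2 → Disjoint (D q1) (D q2) := by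
    intro q1 hq1 q2 hq2 hlt
    rw [Set.disjoint_left]
    intro z hz1 hz2
    have hq1G : q1 ∈ G := Finset.mem_of_mem_erase hq1
    have hq2G : q2 ∈ G := Finset.mem_of_mem_erase hq2
    have hq2ne : q2 ≠ v₀ := (Finset.mem_erase.1 hq2).1
    have hq2v₀ : v₀ < q2 := lt_of_le_of_ne (hGIcc q2 hq2G).1 (Ne.symm hq2ne)
    have hfne2 : (G.filter (fun s => s < q2)).Nonempty :=
      ⟨v₀, Finset.mem_filter.2 ⟨hGv₀, hq2v₀⟩⟩
    obtain ⟨_, _, hpmax2⟩ := prevG_spec hfne2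
    have hq1le : q1 ≤ prevG G q2 := hpmax2 q1 hq1G hlt
    simp only [hD, Set.mem_setOf_eq, Set.mem_Ioc] at hz1 hz2
    linarith [hz1.2, hz2.1]
  have hDdisj : (↑(G.erase v₀) : Set ℝ).PairwiseDisjoint D := by
    intro q1 hq1 q2 hq2 hne12
    rcases lt_or_gt_of_ne hne12 with h | h
    · exact hDdisj0 q1 (Finset.mem_coe.1 hq1) q2 (Finset.mem_coe.1 hq2) h
    · exact (hDdisj0 q2 (Finset.mem_coe.1 hq2) q1 (Finset.mem_coe.1 hq1) h).symm
  have hinner : ∀ x ∈ F,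
      ∑ q ∈ G.erase v₀, (ν (BΓ x ∩ D q)).toReal ≤ (ν (BΓ x)).toReal := by
    intro x _
    have hdisj2 : (↑(G.erase v₀) : Set ℝ).PairwiseDisjoint (fun q => BΓ x ∩ D q) :=
      fun q1 hq1 q2 hq2 hne12 =>
        ((hDdisj hq1 hq2 hne12).inter_left' _).inter_right' _
    have hmeq : ∑ q ∈ G.erase v₀, ν (BΓ x ∩ D q) = ν (⋃ q ∈ G.erase v₀, BΓ x ∩ D q) :=
      (measure_biUnion_finset hdisj2 (fun q _ => (hBΓmeas x).inter (hDmeas q))).symm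
    have hmle : ν (⋃ q ∈ G.erase v₀, BΓ x ∩ D q) ≤ ν (BΓ x) :=
      measure_mono (Set.iUnion₂_subset fun q _ => Set.inter_subset_left)
    calc ∑ q ∈ G.erase v₀, (ν (BΓ x ∩ D q)).toReal
        = (∑ q ∈ G.erase v₀, ν (BΓ x ∩ D q)).toReal :=
          (ENNReal.toReal_sum (fun q _ => measure_ne_top _ _)).symm
      _ ≤ (ν (BΓ x)).toReal := by
          rw [hmeq]
          exact ENNReal.toReal_mono (measure_ne_top _ _) hmle
  calc a ^ 2 / ℓ
      ≤ (∑ q ∈ G.erase v₀, min ((q - prevG G q) / 2) r * (W (prevG G q) + W q)) / ℓ :=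
        by gcongr
    _ = ∑ q ∈ G.erase v₀, min ((q - prevG G q) / 2) r * (W (prevG G q) + W q) / ℓ :=
        Finset.sum_div _ _ _
    _ ≤ ∑ q ∈ G.erase v₀, ∑ x ∈ F, w x * (ν (BΓ x ∩ D q)).toReal :=
        Finset.sum_le_sum key
    _ = ∑ x ∈ F, ∑ q ∈ G.erase v₀, w x * (ν (BΓ x ∩ D q)).toReal := Finset.sum_comm
    _ = ∑ x ∈ F, w x * ∑ q ∈ G.erase v₀, (ν (BΓ x ∩ D q)).toReal := by
        refine Finset.sum_congr rfl fun x _ => ?_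
        rw [Finset.mul_sum]
    _ ≤ ∑ x ∈ F, w x * (ν (BΓ x)).toReal :=
        Finset.sum_le_sum fun x hx =>
          mul_le_mul_of_nonneg_left (hinner x hx) (hw0 x)


lemma quada_eq_sum (ℓ a : ℝ) (ξ : AddCircle ℓ →₀ ℕ) (F : Finset (AddCircle ℓ))
    (hF : ξ.support ⊆ F) :
    quada ℓ a ξ = ∑ u ∈ F, ∑ v ∈ F, (ξ u : ℝ) * (ξ v : ℝ) * max (a - dist u v) 0 := by
  classical
  have hinner : ∀ u, ∑ v ∈ ξ.support, (ξ u : ℝ) * (ξ v : ℝ) * max (a - dist u v) 0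
      = ∑ v ∈ F, (ξ u : ℝ) * (ξ v : ℝ) * max (a - dist u v) 0 :=
    fun u => Finset.sum_subset hF (fun v _ hv => by
      rw [Finsupp.notMem_support_iff.1 hv]; simp)
  rw [quada]
  calc ∑ u ∈ ξ.support, ∑ v ∈ ξ.support, (ξ u : ℝ) * (ξ v : ℝ) * max (a - dist u v) 0
      = ∑ u ∈ ξ.support, ∑ v ∈ F, (ξ u : ℝ) * (ξ v : ℝ) * max (a - dist u v) 0 :=
        Finset.sum_congr rfl fun u _ => hinner u
    _ = ∑ u ∈ F, ∑ v ∈ F, (ξ u : ℝ) * (ξ v : ℝ) * max (a - dist u v) 0 :=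
        Finset.sum_subset hF (fun u _ hu => Finset.sum_eq_zero fun v _ => by
          rw [Finsupp.notMem_support_iff.1 hu]; simp)

lemma quada_sub_single (ℓ a : ℝ) (ha : 0 < a) (ζ : AddCircle ℓ →₀ ℕ) {x : AddCircle ℓ}
    (hx : x ∈ ζ.support) :
    quada ℓ a (ζ - Finsupp.single x 1)
      = quada ℓ a ζ - 2 * (∑ y ∈ ζ.support, (ζ y : ℝ) * max (a - dist x y) 0) + a := by
  classical
  set f : AddCircle ℓ → AddCircle ℓ → ℝ := fun u v => max (a - dist u v) 0 with hf
  set e : AddCircle ℓ → ℝ := fun u => if x = u then (1:ℝ) else 0 with he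
  have hζx : 1 ≤ ζ x := Nat.one_le_iff_ne_zero.2 (Finsupp.mem_support_iff.1 hx)
  have hcast : ∀ u, (((ζ - Finsupp.single x 1 : AddCircle ℓ →₀ ℕ) u : ℕ) : ℝ) = (ζ u : ℝ) - e u := by
    intro u
    rw [Finsupp.tsub_apply, Finsupp.single_apply, he]
    by_cases h : x = u
    · subst h
      simp only [if_true, eq_self_iff_true]
      rw [Nat.cast_sub hζx]
      simp
    · simp [h]
  have hesum : ∀ (g : AddCircle ℓ → ℝ), ∑ u ∈ ζ.support, e u * g u = g x := by
    intro g
    rw [Finset.sum_eq_single x (fun b _ hb => by simp [he, Ne.symm hb])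
      (fun h => absurd hx h)]
    simp [he]
  have hfxx : f x x = a := by simp [hf, max_eq_left ha.le]
  have hfsymm : ∀ u v, f u v = f v u := fun u v => by simp [hf, dist_comm]
  set P : AddCircle ℓ → ℝ := fun u => ∑ v ∈ ζ.support, (ζ v : ℝ) * f u v with hP
  have hinner : ∀ u : AddCircle ℓ,
      ∑ v ∈ ζ.support, ((ζ u : ℝ) - e u) * ((ζ v : ℝ) - e v) * f u v
        = ((ζ u : ℝ) - e u) * (P u - f u x) := by
    intro u
    have h1 : ∀ v ∈ ζ.support, ((ζ u : ℝ) - e u) * ((ζ v : ℝ) - e v) * f u v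
        = ((ζ u : ℝ) - e u) * ((ζ v : ℝ) * f u v - e v * f u v) := fun v _ => by ring
    rw [Finset.sum_congr rfl h1, ← Finset.mul_sum, Finset.sum_sub_distrib,
      hesum (fun v => f u v), hP]
  have houter :
      ∑ u ∈ ζ.support, ((ζ u : ℝ) - e u) * (P u - f u x)
        = ∑ u ∈ ζ.support, ((ζ u : ℝ) * P u - (ζ u : ℝ) * f u x - e u * P u + e u * f u x) :=
    Finset.sum_congr rfl fun u _ => by ring
  have hq : quada ℓ a ζ = ∑ u ∈ ζ.support, (ζ u : ℝ) * P u := by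
    rw [quada]
    refine Finset.sum_congr rfl fun u _ => ?_
    rw [hP, Finset.mul_sum]
    exact Finset.sum_congr rfl fun v _ => by rw [hf]; ring
  have hPsymm : ∑ u ∈ ζ.support, (ζ u : ℝ) * f u x = P x := by
    rw [hP]
    exact Finset.sum_congr rfl fun u _ => by rw [hfsymm]
  rw [quada_eq_sum ℓ a _ ζ.support Finsupp.support_tsub]
  simp only [hcast]
  rw [Finset.sum_congr rfl (fun u _ => hinner u), houter, Finset.sum_add_distrib,
    Finset.sum_sub_distrib, Finset.sum_sub_distrib, hesum P, hesum (fun u => f u x),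
    hPsymm, hfxx, ← hq]
  have : P x = ∑ y ∈ ζ.support, (ζ y : ℝ) * max (a - dist x y) 0 := by
    rw [hP]
  rw [this]
  ring


end PollingAux

/-- Polling decreases the quadratic functional: for `0 < a ≤ min(ℓ/2, 2r)`,
`A_p h(ζ) ≤ h(ζ) + a - 2(a²/ℓ)·ζ(S)` where
`A_p h(ζ) = h(ζ)(1 - k_r(ζ)) + ∑_{x ∈ ζ} h(ζ - δ_x)·m(B_r(x) ∩ Γ_ζ(x))` and
`k_r(ζ) = m(⋃_{x ∈ ζ} B_r(x))`, `m` being the normalized Haar measure on the circle. -/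
theorem polling_decreases_quadratic (ℓ : ℝ) [Fact (0 < ℓ)] (a r : ℝ) (ha : 0 < a)
    (haℓ : a ≤ ℓ / 2) (har : a ≤ 2 * r) (ζ : AddCircle ℓ →₀ ℕ) :
    quada ℓ a ζ *
        (1 - (AddCircle.haarAddCircle (⋃ x ∈ ζ.support, Metric.ball x r)).toReal)
      + ∑ x ∈ ζ.support, quada ℓ a (ζ - Finsupp.single x 1) *
          (AddCircle.haarAddCircle (Metric.ball x r ∩ voronoi ℓ ζ.support x)).toReal
      ≤ quada ℓ a ζ + a - 2 * (a ^ 2 / ℓ) * (∑ x ∈ ζ.support, (ζ x : ℝ)) := by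
  classical
  have hl : (0:ℝ) < ℓ := Fact.out
  set F := ζ.support with hF
  set ν : Measure (AddCircle ℓ) := AddCircle.haarAddCircle with hν
  set μ : AddCircle ℓ → ℝ := fun x => (ν (Metric.ball x r ∩ voronoi ℓ F x)).toReal with hμ
  set kk : ℝ := (ν (⋃ x ∈ F, Metric.ball x r)).toReal with hkk
  set g : AddCircle ℓ → ℝ := fun x => ∑ y ∈ F, (ζ y : ℝ) * max (a - dist x y) 0 with hg
  set q : ℝ := quada ℓ a ζ with hqdef
  have hμ0 : ∀ x, 0 ≤ μ x := fun x => ENNReal.toReal_nonneg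
  set K := ∑ x ∈ F, μ x with hK
  -- rewrite the sum
  have hsum1 : ∑ x ∈ F, quada ℓ a (ζ - Finsupp.single x 1) * μ x
      = q * K + a * K - 2 * ∑ x ∈ F, g x * μ x := by
    have : ∀ x ∈ F, quada ℓ a (ζ - Finsupp.single x 1) * μ x
        = q * μ x + a * μ x - 2 * (g x * μ x) := by
      intro x hx
      rw [quada_sub_single ℓ a ha ζ hx]
      ring
    rw [Finset.sum_congr rfl this, Finset.sum_sub_distrib, Finset.sum_add_distrib,
      ← Finset.mul_sum, ← Finset.mul_sum, ← Finset.mul_sum, ← hK]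
  -- nonnegativity of quada
  have hq0 : 0 ≤ q := by
    rw [hqdef, quada]
    exact Finset.sum_nonneg fun u _ => Finset.sum_nonneg fun v _ =>
      mul_nonneg (mul_nonneg (Nat.cast_nonneg _) (Nat.cast_nonneg _)) (le_max_right _ _)
  -- K ≤ kk
  have hmeasBV : ∀ x : AddCircle ℓ, MeasurableSet (Metric.ball x r ∩ voronoi ℓ F x) :=
    fun x => Metric.isOpen_ball.measurableSet.inter (measurableSet_voronoi F x)
  have hKk : K ≤ kk := by
    have hdisj : (↑F : Set (AddCircle ℓ)).PairwiseDisjoint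
        (fun x => Metric.ball x r ∩ voronoi ℓ F x) := by
      intro x hx y hy hxy
      rw [Function.onFun, Set.disjoint_left]
      rintro z ⟨_, hzx⟩ ⟨_, hzy⟩
      exact lt_asymm (hzx y (Finset.mem_coe.1 hy) hxy.symm)
        (hzy x (Finset.mem_coe.1 hx) hxy)
    have h1 : ∑ x ∈ F, ν (Metric.ball x r ∩ voronoi ℓ F x)
        = ν (⋃ x ∈ F, Metric.ball x r ∩ voronoi ℓ F x) :=
      (measure_biUnion_finset hdisj fun x _ => hmeasBV x).symm
    have h2 : ν (⋃ x ∈ F, Metric.ball x r ∩ voronoi ℓ F x) ≤ ν (⋃ x ∈ F, Metric.ball x r) :=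
      measure_mono (Set.iUnion₂_mono fun x _ => Set.inter_subset_left)
    calc K = (∑ x ∈ F, ν (Metric.ball x r ∩ voronoi ℓ F x)).toReal :=
          (ENNReal.toReal_sum fun x _ => measure_ne_top _ _).symm
      _ ≤ kk := by
          rw [h1]
          exact ENNReal.toReal_mono (measure_ne_top _ _) h2
  have hk1 : kk ≤ 1 := by
    rw [hkk]
    calc (ν (⋃ x ∈ F, Metric.ball x r)).toReal ≤ (1 : ENNReal).toReal :=
          ENNReal.toReal_mono ENNReal.one_ne_top prob_le_one
      _ = 1 := by simp
  -- interpolation inequality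
  have hF4 : (a ^ 2 / ℓ) * (∑ x ∈ F, (ζ x : ℝ)) ≤ ∑ x ∈ F, g x * μ x := by
    have hswap : ∑ x ∈ F, g x * μ x
        = ∑ y ∈ F, (ζ y : ℝ) * ∑ x ∈ F, max (a - dist x y) 0 * μ x := by
      have h1 : ∀ x ∈ F, g x * μ x = ∑ y ∈ F, (ζ y : ℝ) * (max (a - dist x y) 0 * μ x) := by
        intro x _
        rw [hg, Finset.sum_mul]
        exact Finset.sum_congr rfl fun y _ => by ring
      rw [Finset.sum_congr rfl h1, Finset.sum_comm]
      exact Finset.sum_congr rfl fun y _ => by rw [Finset.mul_sum]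
    rw [hswap]
    have : ∀ y ∈ F, (ζ y : ℝ) * (a ^ 2 / ℓ)
        ≤ (ζ y : ℝ) * ∑ x ∈ F, max (a - dist x y) 0 * μ x := fun y hy =>
      mul_le_mul_of_nonneg_left (core a r ha haℓ har F hy) (Nat.cast_nonneg _)
    calc (a ^ 2 / ℓ) * (∑ x ∈ F, (ζ x : ℝ)) = ∑ y ∈ F, (ζ y : ℝ) * (a ^ 2 / ℓ) := by
          rw [Finset.mul_sum]
          exact Finset.sum_congr rfl fun y _ => by ring
      _ ≤ _ := Finset.sum_le_sum this
  -- finish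
  have hgs : ∑ x ∈ F, quada ℓ a (ζ - Finsupp.single x 1)
        * (ν (Metric.ball x r ∩ voronoi ℓ F x)).toReal
      = ∑ x ∈ F, quada ℓ a (ζ - Finsupp.single x 1) * μ x := rfl
  rw [hgs, hsum1]
  have e1 : q * K ≤ q * kk := mul_le_mul_of_nonneg_left hKk hq0
  have e2 : a * K ≤ a * 1 := mul_le_mul_of_nonneg_left (hKk.trans hk1) ha.le
  have e3 : 2 * ((a ^ 2 / ℓ) * (∑ x ∈ F, (ζ x : ℝ))) ≤ 2 * ∑ x ∈ F, g x * μ x := by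
    linarith [hF4]
  nlinarith [e1, e2, e3]
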